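/- Let k be a field, α ∈ k nonzero, B = B_α = k[X₁,X₂,X₃,X₄]/(αX₁X₃+X₂X₃, X₁X₄+X₂X₄, X₃², X₄², X₁², X₂², X₃X₄), and for an integer q let T_q = B/(x₁−x₂, x₁−α^q x₃, x₁−x₄). Let d̄_i : T_q² → T_q² be given by the matrix [[x̄₁, α^{i−q}x̄₁],[x̄₁, x̄₁]] induced by reducing [[x₁, αⁱx₃],[x₄, x₂]] modulo the defining ideal of T_q. Then dim_k(im d̄_i) = 1 if α^{i−q} = 1, and dim_k(im d̄_i) = 2 otherwise. -/

import Mathlib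

set_option synthInstance.maxHeartbeats 1000000
set_option maxHeartbeats 2000000

open MvPolynomial in
/-- `B = B_α = k[X₁,…,X₄]/(αX₁X₃+X₂X₃, X₁X₄+X₂X₄, X₃², X₄², X₁², X₂², X₃X₄)`. -/
noncomputable abbrev GPB4 (k : Type) [Field k] (α : k) : Type :=
  MvPolynomial (Fin 4) k ⧸ (Ideal.span {C α * X 0 * X 2 + X 1 * X 2,
    X 0 * X 3 + X 1 * X 3, X 2 ^ 2, X 3 ^ 2, X 0 ^ 2, X 1 ^ 2, X 2 * X 3} :
      Ideal (MvPolynomial (Fin 4) k))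

/-- The residue class of `X i` in `B_α`. -/
noncomputable def b4x {k : Type} [Field k] (α : k) (i : Fin 4) : GPB4 k α :=
  Ideal.Quotient.mk _ (MvPolynomial.X i)

/-- `T_q = B/(x₁ − x₂, x₁ − α^q x₃, x₁ − x₄)`. -/
noncomputable abbrev TqB (k : Type) [Field k] (α : k) (q : ℤ) : Type :=
  GPB4 k α ⧸ Ideal.span {b4x α 0 - b4x α 1,
    b4x α 0 - algebraMap k (GPB4 k α) (α ^ q) * b4x α 2, b4x α 0 - b4x α 3}

/-- The image `x̄₁` of `x₁` in `T_q`. -/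
noncomputable def tqx1 {k : Type} [Field k] (α : k) (q : ℤ) : TqB k α q :=
  Ideal.Quotient.mk _ (b4x α 0)

namespace Stmt19Aux

variable {k : Type} [Field k] (α : k) (q : ℤ)

/-- images of the variables in `T_q`. -/
noncomputable def tx (i : Fin 4) : TqB k α q := Ideal.Quotient.mk _ (b4x α i)

lemma tqx1_eq : tqx1 α q = tx α q 0 := rfl

lemma tqx1_sq : tqx1 α q * tqx1 α q = 0 := by
  have h : b4x α 0 * b4x α 0 = 0 := by
    rw [b4x, ← map_mul, Ideal.Quotient.eq_zero_iff_mem, ← sq]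
    exact Ideal.subset_span (by simp)
  rw [tqx1, ← map_mul, h, map_zero]

lemma rel01 : tx α q 0 = tx α q 1 := by
  rw [← sub_eq_zero, tx, tx, ← map_sub, Ideal.Quotient.eq_zero_iff_mem]
  exact Ideal.subset_span (by simp)

lemma rel02 : tx α q 0 = (algebraMap k (TqB k α q) : k →+* TqB k α q) (α ^ q) * tx α q 2 := by
  have h : Ideal.Quotient.mk _ (b4x α 0 - algebraMap k (GPB4 k α) (α ^ q) * b4x α 2)
      = (0 : TqB k α q) := by
    rw [Ideal.Quotient.eq_zero_iff_mem]; exact Ideal.subset_span (by simp)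
  rw [map_sub, map_mul, sub_eq_zero] at h
  rw [tx, tx, h, IsScalarTower.algebraMap_apply k (GPB4 k α) (TqB k α q),
    Ideal.Quotient.algebraMap_eq]

lemma rel03 : tx α q 0 = tx α q 3 := by
  rw [← sub_eq_zero, tx, tx, ← map_sub, Ideal.Quotient.eq_zero_iff_mem]
  exact Ideal.subset_span (by simp)

open DualNumber MvPolynomial in
noncomputable def phi0 : MvPolynomial (Fin 4) k →ₐ[k] DualNumber k :=
  MvPolynomial.aeval ![ε, ε, (α ^ q)⁻¹ • ε, ε]

open MvPolynomial in
lemma phi0_gen : ∀ a ∈ ({C α * X 0 * X 2 + X 1 * X 2,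
    X 0 * X 3 + X 1 * X 3, X 2 ^ 2, X 3 ^ 2, X 0 ^ 2, X 1 ^ 2, X 2 * X 3} :
    Set (MvPolynomial (Fin 4) k)), phi0 α q a = 0 := by
  intro a ha
  simp only [Set.mem_insert_iff, Set.mem_singleton_iff] at ha
  rcases ha with h|h|h|h|h|h|h <;> subst h <;>
    simp [phi0, mul_smul_comm, smul_mul_assoc, mul_assoc, DualNumber.eps_mul_eps, sq]

noncomputable def phi1 : GPB4 k α →ₐ[k] DualNumber k :=
  Ideal.Quotient.liftₐ _ (phi0 α q)
    (fun a ha => by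
      have hker : Ideal.span _ ≤ RingHom.ker (phi0 α q).toRingHom :=
        Ideal.span_le.mpr (fun x hx => RingHom.mem_ker.mpr (phi0_gen α q x hx))
      exact RingHom.mem_ker.mp (hker ha))

lemma phi1_b4x (i : Fin 4) :
    phi1 α q (b4x α i) = ![DualNumber.eps, DualNumber.eps,
      (α ^ q)⁻¹ • DualNumber.eps, DualNumber.eps] i := by
  show phi0 α q (MvPolynomial.X i) = _
  simp [phi0]

noncomputable def phi (hα : α ≠ 0) : TqB k α q →ₐ[k] DualNumber k :=
  Ideal.Quotient.liftₐ _ (phi1 α q)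
    (fun a ha => by
      have hker : Ideal.span {b4x α 0 - b4x α 1,
          b4x α 0 - algebraMap k (GPB4 k α) (α ^ q) * b4x α 2, b4x α 0 - b4x α 3}
          ≤ RingHom.ker (phi1 α q).toRingHom := by
        refine Ideal.span_le.mpr ?_
        intro x hx
        simp only [Set.mem_insert_iff, Set.mem_singleton_iff] at hx
        have hz : α ^ q ≠ 0 := zpow_ne_zero q hα
        rcases hx with h|h|h <;> subst h <;>
          refine RingHom.mem_ker.mpr ?_ <;>
          simp [phi1_b4x, ← Algebra.smul_def, smul_smul, inv_mul_cancel₀ hz, mul_inv_cancel₀ hz]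
      exact RingHom.mem_ker.mp (hker ha))

lemma phi_tx0 (hα : α ≠ 0) : phi α q hα (tx α q 0) = DualNumber.eps := by
  show phi1 α q (b4x α 0) = _
  simp [phi1_b4x]

lemma smul_tqx1 (hα : α ≠ 0) {b : k} (h : b • tqx1 α q = 0) : b = 0 := by
  have h2 : phi α q hα (b • tqx1 α q) = 0 := by rw [h, map_zero]
  rw [map_smul, tqx1_eq, phi_tx0 α q hα] at h2
  simpa using congrArg TrivSqZeroExt.snd h2

lemma tqx1_ne_zero (hα : α ≠ 0) : tqx1 α q ≠ 0 := by
  intro h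
  have := smul_tqx1 α q hα (b := 1) (by simpa using h)
  simp at this

lemma tq_zero_mul (x : TqB k α q) : (0 : TqB k α q) * x = 0 := zero_mul (M₀ := TqB k α q) x

lemma tq_one_mul (x : TqB k α q) : (1 : TqB k α q) * x = x := one_mul (M := TqB k α q) x

lemma tq_mul_one (x : TqB k α q) : x * (1 : TqB k α q) = x := mul_one (M := TqB k α q) x

lemma tq_mul_zero (x : TqB k α q) : x * (0 : TqB k α q) = 0 := mul_zero (M₀ := TqB k α q) x

lemma tq_map_one : (algebraMap k (TqB k α q) : k →+* TqB k α q) 1 = 1 := map_one _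

lemma tq_smul_def (c : k) (x : TqB k α q) :
    c • x = (algebraMap k (TqB k α q) : k →+* TqB k α q) c * x :=
  Algebra.smul_def (A := TqB k α q) c x

lemma tx_eq_smul (hα : α ≠ 0) (n : Fin 4) :
    ∃ c : k, tx α q n = c • tqx1 α q := by
  have hz : α ^ q ≠ 0 := zpow_ne_zero q hα
  fin_cases n
  · exact ⟨1, by show tx α q 0 = (1 : k) • tqx1 α q; rw [one_smul, tqx1_eq]⟩
  · exact ⟨1, by show tx α q 1 = (1 : k) • tqx1 α q; rw [one_smul, tqx1_eq, ← rel01]⟩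
  · refine ⟨(α ^ q)⁻¹, ?_⟩
    show tx α q 2 = (α ^ q)⁻¹ • tqx1 α q
    rw [tqx1_eq, rel02 α q, tq_smul_def, ← mul_assoc, ← map_mul,
      inv_mul_cancel₀ hz, tq_map_one, tq_one_mul]
  · exact ⟨1, by show tx α q 3 = (1 : k) • tqx1 α q; rw [one_smul, tqx1_eq, ← rel03]⟩

lemma mul_tx_mem (hα : α ≠ 0) (n : Fin 4) :
    ∀ t ∈ Submodule.span k {(1 : TqB k α q), tqx1 α q},
      t * tx α q n ∈ Submodule.span k {(1 : TqB k α q), tqx1 α q} := by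
  intro t ht
  obtain ⟨c, hc⟩ := tx_eq_smul α q hα n
  induction ht using Submodule.span_induction with
  | mem x hx =>
    rcases hx with h | h
    · subst h
      rw [tq_one_mul, hc]
      exact Submodule.smul_mem _ _ (Submodule.subset_span (by simp))
    · simp only [Set.mem_singleton_iff] at h
      subst h
      rw [hc, mul_smul_comm, tqx1_sq, smul_zero]
      exact Submodule.zero_mem _
  | zero => rw [tq_zero_mul]; exact Submodule.zero_mem _
  | add x y _ _ hx hy => rw [add_mul]; exact Submodule.add_mem _ hx hy
  | smul a x _ hx => rw [smul_mul_assoc]; exact Submodule.smul_mem _ _ hx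

open MvPolynomial in
lemma span_top (hα : α ≠ 0) :
    Submodule.span k {(1 : TqB k α q), tqx1 α q} = ⊤ := by
  rw [eq_top_iff]
  rintro t -
  obtain ⟨b, rfl⟩ := Ideal.Quotient.mk_surjective t
  obtain ⟨p, rfl⟩ := Ideal.Quotient.mk_surjective b
  induction p using MvPolynomial.induction_on with
  | C a =>
    have : (Ideal.Quotient.mk _ (Ideal.Quotient.mk _ (C a)) : TqB k α q)
        = a • (1 : TqB k α q) := by
      rw [tq_smul_def, tq_mul_one]; rfl
    rw [this]
    exact Submodule.smul_mem _ _ (Submodule.subset_span (by simp))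
  | add p r hp hr =>
    rw [map_add, map_add]
    exact Submodule.add_mem _ hp hr
  | mul_X p n hp =>
    rw [map_mul, map_mul]
    exact mul_tx_mem α q hα n _ hp

lemma mul_x1 (hα : α ≠ 0) (t : TqB k α q) :
    ∃ a : k, tqx1 α q * t = a • tqx1 α q := by
  have ht : t ∈ Submodule.span k {(1 : TqB k α q), tqx1 α q} := by
    rw [span_top α q hα]; trivial
  obtain ⟨a, b, rfl⟩ := Submodule.mem_span_pair.mp ht
  refine ⟨a, ?_⟩
  rw [mul_add, mul_smul_comm, tq_mul_one, mul_smul_comm, tqx1_sq, smul_zero, add_zero]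

end Stmt19Aux

open Stmt19Aux in
/-- The matrix `d̄_i = [[x̄₁, α^{i−q}x̄₁],[x̄₁, x̄₁]]` over `T_q`, obtained by reducing
`[[x₁, αⁱx₃],[x₄, x₂]]` modulo the defining ideal of `T_q`. Its image in `T_q²` has
`k`-dimension `1` if `α^{i−q} = 1`, and `2` otherwise. -/
theorem stmt19 (k : Type) [Field k] (α : k) (hα : α ≠ 0) (q i : ℤ) :
    let d : Matrix (Fin 2) (Fin 2) (TqB k α q) :=
      !![tqx1 α q, (algebraMap k (TqB k α q) : k →+* TqB k α q) (α ^ (i - q)) * tqx1 α q;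
         tqx1 α q, tqx1 α q];
    (α ^ (i - q) = 1 →
      Module.finrank k ((LinearMap.range (Matrix.toLin' d)).restrictScalars k) = 1) ∧
    (α ^ (i - q) ≠ 1 →
      Module.finrank k ((LinearMap.range (Matrix.toLin' d)).restrictScalars k) = 2) := by
  intro d
  set β : k := α ^ (i - q) with hβ
  set v0 : Fin 2 → TqB k α q := ![tqx1 α q, tqx1 α q] with hv0
  set v1 : Fin 2 → TqB k α q :=
    ![(algebraMap k (TqB k α q) : k →+* TqB k α q) β * tqx1 α q, tqx1 α q] with hv1
  have hrange : (LinearMap.range (Matrix.toLin' d)).restrictScalars k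
      = Submodule.span k {v0, v1} := by
    apply le_antisymm
    · rintro y hy
      rw [Submodule.restrictScalars_mem] at hy
      obtain ⟨u, rfl⟩ := hy
      obtain ⟨a0, ha0⟩ := mul_x1 α q hα (u 0)
      obtain ⟨a1, ha1⟩ := mul_x1 α q hα (u 1)
      have he : Matrix.toLin' d u = a0 • v0 + a1 • v1 := by
        funext j
        fin_cases j <;>
          simp [d, hv0, hv1, Matrix.toLin'_apply, Matrix.mulVec, dotProduct,
            Fin.sum_univ_two, mul_assoc, ha0, ha1, mul_smul_comm, ← hβ]
      rw [he]
      exact Submodule.add_mem _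
        (Submodule.smul_mem _ _ (Submodule.subset_span (by simp)))
        (Submodule.smul_mem _ _ (Submodule.subset_span (by simp)))
    · rw [Submodule.span_le]
      rintro z hz
      rcases hz with h | h
      · subst h
        rw [SetLike.mem_coe, Submodule.restrictScalars_mem]
        refine ⟨![1, 0], ?_⟩
        funext j
        fin_cases j <;>
          simp [d, hv0, Matrix.toLin'_apply, Matrix.mulVec, dotProduct,
            Fin.sum_univ_two, tq_mul_one, tq_mul_zero]
      · simp only [Set.mem_singleton_iff] at h
        subst h
        rw [SetLike.mem_coe, Submodule.restrictScalars_mem]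
        refine ⟨![0, 1], ?_⟩
        funext j
        fin_cases j <;>
          simp [d, hv1, Matrix.toLin'_apply, Matrix.mulVec, dotProduct,
            Fin.sum_univ_two, tq_mul_one, tq_mul_zero, ← hβ]
  constructor
  · intro h1
    have hv : v1 = v0 := by rw [hv1, hv0, h1, tq_map_one, tq_one_mul]
    rw [hrange, hv, Set.pair_eq_singleton]
    have hne : v0 ≠ 0 := by
      intro h
      exact tqx1_ne_zero α q hα (by simpa [hv0] using congrFun h 0)
    exact finrank_span_singleton hne
  · intro h2
    have hli : LinearIndependent k ![v0, v1] := by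
      rw [LinearIndependent.pair_iff]
      intro s t hst
      have e0 := congrFun hst 0
      have e1 := congrFun hst 1
      rw [hv0, hv1] at e0 e1
      simp only [Pi.add_apply, Pi.smul_apply, Matrix.cons_val_zero, Matrix.cons_val_one,
        Matrix.head_cons, Pi.zero_apply] at e0 e1
      have hba : (algebraMap k (TqB k α q) : k →+* TqB k α q) β * tqx1 α q = β • tqx1 α q :=
        (tq_smul_def α q β (tqx1 α q)).symm
      rw [hba, smul_smul, ← add_smul] at e0
      rw [← add_smul] at e1
      have hs0 := smul_tqx1 α q hα e0
      have hs1 := smul_tqx1 α q hα e1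
      have ht : t = 0 := by
        have : t * (β - 1) = 0 := by linear_combination hs0 - hs1
        rcases mul_eq_zero.mp this with h | h
        · exact h
        · exact absurd (sub_eq_zero.mp h) h2
      constructor
      · rw [ht, add_zero] at hs1; exact hs1
      · exact ht
    have hset : ({v0, v1} : Set (Fin 2 → TqB k α q)) = Set.range ![v0, v1] :=
      (Matrix.range_cons_cons_empty v0 v1 _).symm
    rw [hrange, hset, finrank_span_eq_card hli]
    simp
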